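/- Fix a > 0, c > 0, b, d ∈ ℝ, μ ≠ 0, D'(0) > 0, and suppose aN + b < cN + d. Then there exist constants C > 0 and N₀ such that for all N > N₀, ∫₀^∞ ∫_{−∞}^∞ (1 + |s|^{aN+b}) exp(−N(s² + μ²)ρ²/(2D'(0))) ρ^{cN+d} ds dρ ≤ C^N. -/

import Mathlib

open Real MeasureTheory Filter


lemma aux1 {x k : ℝ} (hx : 0 ≤ x) (hk : 0 < k) :
    x ^ k * Real.exp (-x) ≤ k ^ k * Real.exp (-k) := by
  rcases eq_or_lt_of_le hx with h | h
  · rw [← h, Real.zero_rpow hk.ne']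
    have : (0:ℝ) ≤ k ^ k * Real.exp (-k) := by positivity
    simpa using this
  · rw [Real.rpow_def_of_pos h, Real.rpow_def_of_pos hk, ← Real.exp_add, ← Real.exp_add,
      Real.exp_le_exp]
    have hlog := Real.log_le_sub_one_of_pos (show 0 < x / k by positivity)
    rw [Real.log_div h.ne' hk.ne'] at hlog
    have h2 : k * (Real.log x - Real.log k) ≤ k * (x / k - 1) :=
      mul_le_mul_of_nonneg_left hlog hk.le
    have h3 : k * (x / k - 1) = x - k := by field_simp
    nlinarith [h2, h3]

lemma aux2 {t m α : ℝ} (ht : 0 ≤ t) (hm : 0 < m) (hα : 0 < α) :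
    t ^ m * Real.exp (-(α * t ^ 2)) ≤ (m / α) ^ (m / 2) * Real.exp (-(α * t ^ 2) / 2) := by
  have h1 : t ^ m = (2 / α) ^ (m / 2) * (α * t ^ 2 / 2) ^ (m / 2) := by
    rw [← Real.mul_rpow (by positivity) (by positivity)]
    have h : 2 / α * (α * t ^ 2 / 2) = t ^ 2 := by field_simp
    rw [h, ← Real.rpow_natCast t 2, ← Real.rpow_mul ht]
    congr 1
    push_cast
    ring
  have h2 := aux1 (x := α * t ^ 2 / 2) (k := m / 2) (by positivity) (by positivity)
  have h3 : Real.exp (-(α * t ^ 2)) = Real.exp (-(α * t ^ 2 / 2)) * Real.exp (-(α * t ^ 2) / 2) := by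
    rw [← Real.exp_add]; ring_nf
  have h4 : (2 / α) ^ (m / 2) * (m / 2) ^ (m / 2) = (m / α) ^ (m / 2) := by
    rw [← Real.mul_rpow (by positivity) (by positivity)]
    congr 1; field_simp
  have hexp1 : Real.exp (-(m / 2)) ≤ 1 := Real.exp_le_one_iff.mpr (by linarith)
  calc t ^ m * Real.exp (-(α * t ^ 2))
      = (2 / α) ^ (m / 2) * ((α * t ^ 2 / 2) ^ (m / 2) * Real.exp (-(α * t ^ 2 / 2)))
        * Real.exp (-(α * t ^ 2) / 2) := by rw [h1, h3]; ring
    _ ≤ (2 / α) ^ (m / 2) * ((m / 2) ^ (m / 2) * Real.exp (-(m / 2)))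
        * Real.exp (-(α * t ^ 2) / 2) := by gcongr
    _ ≤ (2 / α) ^ (m / 2) * ((m / 2) ^ (m / 2) * 1) * Real.exp (-(α * t ^ 2) / 2) := by
        gcongr
    _ = (m / α) ^ (m / 2) * Real.exp (-(α * t ^ 2) / 2) := by rw [mul_one, h4]



lemma aux_int_abs {lam p : ℝ} (hlam : 0 < lam) (hp : 0 < p) :
    Integrable (fun s : ℝ => |s| ^ p * Real.exp (-(lam * s ^ 2))) := by
  have hg : Integrable (fun s : ℝ => (p / lam) ^ (p / 2) * Real.exp (-(lam / 2) * s ^ 2)) :=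
    (integrable_exp_neg_mul_sq (by positivity : (0:ℝ) < lam / 2)).const_mul _
  refine hg.mono' ?_ ?_
  · exact (((Real.continuous_rpow_const hp.le).comp continuous_abs).mul
      (Real.continuous_exp.comp (by continuity))).aestronglyMeasurable
  · refine Filter.Eventually.of_forall fun s => ?_
    have h0 : (0:ℝ) ≤ |s| ^ p * Real.exp (-(lam * s ^ 2)) := by positivity
    rw [Real.norm_eq_abs, abs_of_nonneg h0]
    have := aux2 (t := |s|) (m := p) (α := lam) (abs_nonneg s) hp hlam
    rw [sq_abs] at this
    calc |s| ^ p * Real.exp (-(lam * s ^ 2))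
        ≤ (p / lam) ^ (p / 2) * Real.exp (-(lam * s ^ 2) / 2) := this
      _ = (p / lam) ^ (p / 2) * Real.exp (-(lam / 2) * s ^ 2) := by ring_nf

lemma aux4 {lam p : ℝ} (hlam : 0 < lam) (hp : 0 < p) :
    (∫ s : ℝ, (1 + |s| ^ p) * Real.exp (-(lam * s ^ 2))) ≤
      (1 + (p / lam) ^ (p / 2)) * Real.sqrt (2 * π / lam) := by
  have h1 : Integrable (fun s : ℝ => Real.exp (-(lam * s ^ 2))) := by
    simpa [neg_mul] using integrable_exp_neg_mul_sq hlam
  have h2 := aux_int_abs hlam hp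
  have hsplit : (∫ s : ℝ, (1 + |s| ^ p) * Real.exp (-(lam * s ^ 2)))
      = (∫ s : ℝ, Real.exp (-(lam * s ^ 2))) + ∫ s : ℝ, |s| ^ p * Real.exp (-(lam * s ^ 2)) := by
    rw [← integral_add h1 h2]
    congr 1; funext s; ring
  have e1 : (∫ s : ℝ, Real.exp (-(lam * s ^ 2))) = Real.sqrt (π / lam) := by
    simpa [neg_mul] using integral_gaussian lam
  have e2 : (∫ s : ℝ, |s| ^ p * Real.exp (-(lam * s ^ 2)))
      ≤ (p / lam) ^ (p / 2) * Real.sqrt (2 * π / lam) := by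
    have hmono : (∫ s : ℝ, |s| ^ p * Real.exp (-(lam * s ^ 2)))
        ≤ ∫ s : ℝ, (p / lam) ^ (p / 2) * Real.exp (-(lam / 2) * s ^ 2) := by
      refine integral_mono_of_nonneg (Filter.Eventually.of_forall fun s => by positivity)
        ((integrable_exp_neg_mul_sq (by positivity : (0:ℝ) < lam / 2)).const_mul _)
        (Filter.Eventually.of_forall fun s => ?_)
      have := aux2 (t := |s|) (m := p) (α := lam) (abs_nonneg s) hp hlam
      rw [sq_abs] at this
      calc |s| ^ p * Real.exp (-(lam * s ^ 2))
          ≤ (p / lam) ^ (p / 2) * Real.exp (-(lam * s ^ 2) / 2) := this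
        _ = (p / lam) ^ (p / 2) * Real.exp (-(lam / 2) * s ^ 2) := by ring_nf
    rw [MeasureTheory.integral_const_mul, integral_gaussian] at hmono
    have : π / (lam / 2) = 2 * π / lam := by field_simp
    rwa [this] at hmono
  have e3 : Real.sqrt (π / lam) ≤ Real.sqrt (2 * π / lam) := by
    apply Real.sqrt_le_sqrt
    have : (0:ℝ) < π := Real.pi_pos
    rw [div_le_div_iff₀ hlam hlam]  -- π * lam ≤ 2π * lam
    nlinarith
  rw [hsplit]
  calc (∫ s : ℝ, Real.exp (-(lam * s ^ 2))) + ∫ s : ℝ, |s| ^ p * Real.exp (-(lam * s ^ 2))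
      ≤ Real.sqrt (2 * π / lam) + (p / lam) ^ (p / 2) * Real.sqrt (2 * π / lam) := by
        rw [e1]; exact add_le_add e3 e2
    _ = (1 + (p / lam) ^ (p / 2)) * Real.sqrt (2 * π / lam) := by ring


lemma aux3 {β m M : ℝ} (hb : 0 < β) (hm : -1 < m) (hM : 1 ≤ M)
    (hpt : ∀ ρ : ℝ, 1 ≤ ρ → ρ ^ m * Real.exp (-(β * ρ ^ 2)) ≤ M * Real.exp (-(β / 2) * ρ ^ 2)) :
    (∫ ρ in Set.Ioi (0:ℝ), ρ ^ m * Real.exp (-(β * ρ ^ 2)))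
      ≤ 1 / (m + 1) + M * Real.sqrt (2 * π / β) := by
  set f : ℝ → ℝ := fun ρ => ρ ^ m * Real.exp (-(β * ρ ^ 2)) with hf
  have hI : IntegrableOn f (Set.Ioi (0:ℝ)) := by
    simpa [hf, neg_mul] using integrableOn_rpow_mul_exp_neg_mul_sq hb hm
  have hunion : Set.Ioc (0:ℝ) 1 ∪ Set.Ioi (1:ℝ) = Set.Ioi (0:ℝ) :=
    Set.Ioc_union_Ioi_eq_Ioi zero_le_one
  have hI1 : IntegrableOn f (Set.Ioc (0:ℝ) 1) := hI.mono_set (by rw [← hunion]; exact Set.subset_union_left)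
  have hI2 : IntegrableOn f (Set.Ioi (1:ℝ)) := hI.mono_set (by rw [← hunion]; exact Set.subset_union_right)
  have hsplit : (∫ ρ in Set.Ioi (0:ℝ), f ρ)
      = (∫ ρ in Set.Ioc (0:ℝ) 1, f ρ) + ∫ ρ in Set.Ioi (1:ℝ), f ρ := by
    rw [← hunion, setIntegral_union (Set.Ioc_disjoint_Ioi le_rfl) measurableSet_Ioi hI1 hI2]
  have hrpowint : IntegrableOn (fun ρ : ℝ => ρ ^ m) (Set.Ioc (0:ℝ) 1) := by
    have := intervalIntegral.intervalIntegrable_rpow' (a := 0) (b := 1) hm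
    rwa [intervalIntegrable_iff_integrableOn_Ioc_of_le zero_le_one] at this
  have hb1 : (∫ ρ in Set.Ioc (0:ℝ) 1, f ρ) ≤ 1 / (m + 1) := by
    have h1 : (∫ ρ in Set.Ioc (0:ℝ) 1, f ρ) ≤ ∫ ρ in Set.Ioc (0:ℝ) 1, ρ ^ m := by
      refine setIntegral_mono_on hI1 hrpowint measurableSet_Ioc fun ρ hρ => ?_
      have h2 : Real.exp (-(β * ρ ^ 2)) ≤ 1 := Real.exp_le_one_iff.mpr (by nlinarith [hρ.1, hb, sq_nonneg ρ])
      have h3 : (0:ℝ) ≤ ρ ^ m := Real.rpow_nonneg hρ.1.le m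
      calc ρ ^ m * Real.exp (-(β * ρ ^ 2)) ≤ ρ ^ m * 1 := by gcongr
        _ = ρ ^ m := mul_one _
    have h4 : (∫ ρ in Set.Ioc (0:ℝ) 1, (ρ:ℝ) ^ m) = 1 / (m + 1) := by
      rw [← intervalIntegral.integral_of_le zero_le_one, integral_rpow (Or.inl hm)]
      rw [Real.one_rpow, Real.zero_rpow (by linarith : m + 1 ≠ 0)]
      ring
    linarith
  have hb2 : (∫ ρ in Set.Ioi (1:ℝ), f ρ) ≤ M * Real.sqrt (2 * π / β) := by
    have hgint : Integrable (fun ρ : ℝ => M * Real.exp (-(β / 2) * ρ ^ 2)) :=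
      (integrable_exp_neg_mul_sq (by positivity : (0:ℝ) < β / 2)).const_mul _
    have h1 : (∫ ρ in Set.Ioi (1:ℝ), f ρ) ≤ ∫ ρ in Set.Ioi (1:ℝ), M * Real.exp (-(β / 2) * ρ ^ 2) := by
      refine setIntegral_mono_on hI2 hgint.integrableOn measurableSet_Ioi fun ρ hρ => ?_
      exact hpt ρ (le_of_lt hρ)
    have h2 : (∫ ρ in Set.Ioi (1:ℝ), M * Real.exp (-(β / 2) * ρ ^ 2))
        ≤ ∫ ρ in Set.Ioi (0:ℝ), M * Real.exp (-(β / 2) * ρ ^ 2) := by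
      refine setIntegral_mono_set hgint.integrableOn
        (Filter.Eventually.of_forall fun ρ => by positivity)
        (HasSubset.Subset.eventuallyLE (Set.Ioi_subset_Ioi zero_le_one))
    have h3 : (∫ ρ in Set.Ioi (0:ℝ), M * Real.exp (-(β / 2) * ρ ^ 2))
        = M * (Real.sqrt (π / (β / 2)) / 2) := by
      rw [MeasureTheory.integral_const_mul, integral_gaussian_Ioi]
    have h4 : Real.sqrt (π / (β / 2)) / 2 ≤ Real.sqrt (2 * π / β) := by
      have : π / (β / 2) = 2 * π / β := by field_simp
      rw [this]
      have h5 : (0:ℝ) ≤ Real.sqrt (2 * π / β) := Real.sqrt_nonneg _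
      linarith
    calc (∫ ρ in Set.Ioi (1:ℝ), f ρ) ≤ _ := h1
      _ ≤ _ := h2
      _ = M * (Real.sqrt (π / (β / 2)) / 2) := h3
      _ ≤ M * Real.sqrt (2 * π / β) := mul_le_mul_of_nonneg_left h4 (by linarith)
  rw [hsplit]
  linarith





lemma auxfin {L G δ W V : ℝ} (hL : 0 ≤ L) (hG : 0 ≤ G) (hδ : 0 < δ)
    (hW : 1 ≤ W) (hV : 1 ≤ V) :
    L * (1 + W * G) + L * V * (1 / δ + W * G) ≤ L * (1 + 2 * G + 1 / δ) * (W * V) := by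
  have h0 : (0:ℝ) < 1 / δ := by positivity
  have hW0 : (0:ℝ) ≤ W := by linarith
  have hV0 : (0:ℝ) ≤ V := by linarith
  have hWV1 : (1:ℝ) ≤ W * V := by
    have := mul_le_mul hW hV zero_le_one (by linarith)
    simpa using this
  have e1 : L ≤ L * (W * V) := le_mul_of_one_le_right hL hWV1
  have e2 : L * G * W ≤ L * G * W * V :=
    le_mul_of_one_le_right (by positivity) hV
  have e3 : L * (1 / δ) * V ≤ L * (1 / δ) * V * W :=
    le_mul_of_one_le_right (by positivity) hW
  nlinarith [e1, e2, e3]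

set_option maxHeartbeats 1000000 in
/-- Fix `a > 0`, `c > 0`, `b, d ∈ ℝ`, `μ ≠ 0`, `D'(0) > 0` (a constant `D'0`), and suppose
`aN + b < cN + d` (for all large `N`). Then there exist `C > 0` and `N₀` such that for all
`N > N₀`,
`∫₀^∞ ∫_ℝ (1 + |s|^{aN+b}) exp(−N(s² + μ²)ρ²/(2D'0)) ρ^{cN+d} ds dρ ≤ C^N`. -/
theorem stmt15 (a b c d μ D'0 : ℝ) (ha : 0 < a) (hc : 0 < c) (hμ : μ ≠ 0) (hD : 0 < D'0)
    (habcd : ∀ᶠ N : ℕ in Filter.atTop, a * N + b < c * N + d) :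
    ∃ C : ℝ, 0 < C ∧ ∃ N₀ : ℕ, ∀ N : ℕ, N₀ < N →
      (∫ ρ in Set.Ioi (0:ℝ), ∫ s : ℝ,
          (1 + |s| ^ (a * N + b)) *
            Real.exp (-(N * (s ^ 2 + μ ^ 2) * ρ ^ 2) / (2 * D'0)) *
            ρ ^ (c * N + d))
        ≤ C ^ N := by
  obtain ⟨N₁, hN₁⟩ := Filter.eventually_atTop.mp habcd
  have hμ2 : 0 < μ ^ 2 := by positivity
  -- a ≤ c
  have hca : a ≤ c := by
    by_contra hlt
    push_neg at hlt
    set K : ℕ := max N₁ (⌈(d - b) / (a - c)⌉₊ + 1) with hK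
    clear_value K
    have h1 := hN₁ K (by rw [hK]; exact le_max_left _ _)
    have hac : 0 < a - c := by linarith
    have h2 : (d - b) / (a - c) < (K : ℝ) := by
      have h3 : (d - b) / (a - c) ≤ (⌈(d - b) / (a - c)⌉₊ : ℝ) := Nat.le_ceil _
      have h4 : (⌈(d - b) / (a - c)⌉₊ + 1 : ℕ) ≤ K := by rw [hK]; exact le_max_right _ _
      have h5 : ((⌈(d - b) / (a - c)⌉₊ + 1 : ℕ) : ℝ) ≤ (K : ℝ) := Nat.cast_le.mpr h4
      push_cast at h5
      linarith
    have h6 := (div_lt_iff₀ hac).mp h2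
    linarith
  -- global constants
  set A₁ := a + |b| with hA₁def
  set A₂ := c + |d| with hA₂def
  have hA₁ : 0 < A₁ := by have := abs_nonneg b; linarith
  have hA₂ : 0 < A₂ := by have := abs_nonneg d; linarith
  set R := max 1 (2 * D'0 * A₂ / μ ^ 2) with hRdef
  set R₂ := max 1 (2 * D'0 * A₁) with hR₂def
  have hR1 : (1:ℝ) ≤ R := le_max_left _ _
  have hR21 : (1:ℝ) ≤ R₂ := le_max_left _ _
  set G := Real.sqrt (4 * π * D'0 / μ ^ 2) with hGdef
  set L := Real.sqrt (4 * π * D'0) with hLdef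
  have hG0 : 0 ≤ G := Real.sqrt_nonneg _
  have hL0 : 0 ≤ L := Real.sqrt_nonneg _
  set N₀ := N₁ + ⌈(1 + |b|) / a⌉₊ + ⌈(2 + |d|) / c⌉₊ + 1 with hN₀def
  set δ := (c - a) * ((N₀ : ℝ) + 1) + (d - b) with hδdef
  have hδ : 0 < δ := by
    have h1 := hN₁ (N₀ + 1) (by omega)
    push_cast at h1
    rw [hδdef]
    push_cast
    linarith
  set c₀ := max 1 (L * (1 + 2 * G + 1 / δ)) with hc₀def
  have hc₀1 : (1:ℝ) ≤ c₀ := le_max_left _ _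
  set C := c₀ * (R ^ (A₂ / 2) * R₂ ^ (A₁ / 2)) with hCdef
  clear_value A₁ A₂ R R₂ G L N₀ δ c₀ C
  have hC0 : 0 < C := by
    have h1 : (0:ℝ) < R ^ (A₂ / 2) := Real.rpow_pos_of_pos (by linarith) _
    have h2 : (0:ℝ) < R₂ ^ (A₁ / 2) := Real.rpow_pos_of_pos (by linarith) _
    have hc₀0 : (0:ℝ) < c₀ := lt_of_lt_of_le one_pos hc₀1
    rw [hCdef]
    exact mul_pos hc₀0 (mul_pos h1 h2)
  refine ⟨C, hC0, N₀, fun N hN => ?_⟩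
  have hN1 : 1 ≤ N := by omega
  have hNR : (1:ℝ) ≤ (N : ℝ) := by exact_mod_cast hN1
  have hN0R : (0:ℝ) < (N : ℝ) := by linarith
  set p := a * (N:ℝ) + b with hpdef
  set q := c * (N:ℝ) + d with hqdef
  clear_value p q
  -- basic bounds on p, q
  have hceil1 : (⌈(1 + |b|) / a⌉₊ : ℝ) + 1 ≤ (N : ℝ) := by
    have : ⌈(1 + |b|) / a⌉₊ + 1 ≤ N := by omega
    exact_mod_cast this
  have hp1 : 1 ≤ p := by
    have h1 : (1 + |b|) / a ≤ (⌈(1 + |b|) / a⌉₊ : ℝ) := Nat.le_ceil _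
    have h2 : (1 + |b|) / a < (N : ℝ) := by linarith
    have h3 : 1 + |b| < a * (N : ℝ) := by
      have := (div_lt_iff₀ ha).mp h2
      linarith
    have := neg_abs_le b
    rw [hpdef]; linarith
  have hceil2 : (⌈(2 + |d|) / c⌉₊ : ℝ) + 1 ≤ (N : ℝ) := by
    have : ⌈(2 + |d|) / c⌉₊ + 1 ≤ N := by omega
    exact_mod_cast this
  have hq2 : 2 ≤ q := by
    have h1 : (2 + |d|) / c ≤ (⌈(2 + |d|) / c⌉₊ : ℝ) := Nat.le_ceil _
    have h2 : (2 + |d|) / c < (N : ℝ) := by linarith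
    have h3 : 2 + |d| < c * (N : ℝ) := by
      have := (div_lt_iff₀ hc).mp h2
      linarith
    have := neg_abs_le d
    rw [hqdef]; linarith
  have hqp : δ ≤ q - p := by
    have hNc : ((N₀ : ℝ) + 1) ≤ (N : ℝ) := by
      have : N₀ + 1 ≤ N := by omega
      exact_mod_cast this
    have hca' : 0 ≤ c - a := by linarith
    have h1 : (c - a) * ((N₀ : ℝ) + 1) ≤ (c - a) * (N : ℝ) :=
      mul_le_mul_of_nonneg_left hNc hca'
    rw [hδdef, hpdef, hqdef]
    linarith
  have hpA : p ≤ A₁ * (N : ℝ) := by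
    have h1 := le_abs_self b
    have h2 : |b| ≤ |b| * (N : ℝ) := le_mul_of_one_le_right (abs_nonneg b) hNR
    rw [hpdef, hA₁def]; ring_nf; nlinarith [h1, h2]
  have hqA : q ≤ A₂ * (N : ℝ) := by
    have h1 := le_abs_self d
    have h2 : |d| ≤ |d| * (N : ℝ) := le_mul_of_one_le_right (abs_nonneg d) hNR
    rw [hqdef, hA₂def]; ring_nf; nlinarith [h1, h2]
  set β := (N : ℝ) * μ ^ 2 / (2 * D'0) with hβdef
  clear_value β
  have hβ : 0 < β := by rw [hβdef]; positivity
  set W := R ^ (A₂ * (N : ℝ) / 2) with hWdef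
  clear_value W
  have hW1 : (1:ℝ) ≤ W := by
    rw [hWdef]; exact Real.one_le_rpow hR1 (by positivity)
  have hkey : ∀ m : ℝ, 0 < m → m ≤ q → (m / β) ^ (m / 2) ≤ W := by
    intro m hm0 hmq
    have hβR : 2 * D'0 * A₂ / μ ^ 2 * β = A₂ * (N : ℝ) := by
      rw [hβdef]; field_simp
    have h1 : m / β ≤ 2 * D'0 * A₂ / μ ^ 2 := by
      rw [div_le_iff₀ hβ, hβR]
      exact hmq.trans hqA
    have h2 : m / β ≤ R := h1.trans (by rw [hRdef]; exact le_max_right _ _)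
    have h3 : (m / β) ^ (m / 2) ≤ R ^ (m / 2) :=
      Real.rpow_le_rpow (by positivity) h2 (by positivity)
    have h4 : R ^ (m / 2) ≤ R ^ (A₂ * (N : ℝ) / 2) := by
      refine Real.rpow_le_rpow_of_exponent_le hR1 ?_
      have h5 : m ≤ A₂ * (N:ℝ) := hmq.trans hqA
      linarith
    rw [hWdef]
    exact h3.trans h4
  set V := R₂ ^ (A₁ * (N : ℝ) / 2) with hVdef
  clear_value V
  have hV1 : (1:ℝ) ≤ V := by
    rw [hVdef]; exact Real.one_le_rpow hR21 (by positivity)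
  set Kp := (2 * D'0 * p / (N : ℝ)) ^ (p / 2) with hKpdef
  clear_value Kp
  have hKp0 : 0 ≤ Kp := by
    rw [hKpdef]; exact Real.rpow_nonneg (by positivity) _
  have hKpV : Kp ≤ V := by
    have h1 : 2 * D'0 * p / (N : ℝ) ≤ 2 * D'0 * A₁ := by
      rw [div_le_iff₀ hN0R]
      have := mul_le_mul_of_nonneg_left hpA (by positivity : (0:ℝ) ≤ 2 * D'0)
      linarith
    have h2 : 2 * D'0 * p / (N : ℝ) ≤ R₂ := h1.trans (by rw [hR₂def]; exact le_max_right _ _)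
    have h3 : Kp ≤ R₂ ^ (p / 2) := by
      rw [hKpdef]; exact Real.rpow_le_rpow (by positivity) h2 (by positivity)
    have h4 : R₂ ^ (p / 2) ≤ R₂ ^ (A₁ * (N:ℝ) / 2) := by
      refine Real.rpow_le_rpow_of_exponent_le hR21 ?_
      linarith
    rw [hVdef]
    exact h3.trans h4
  set c1 := Real.sqrt (4 * π * D'0 / (N : ℝ)) with hc1def
  clear_value c1
  have hc10 : 0 ≤ c1 := by rw [hc1def]; exact Real.sqrt_nonneg _
  have hc1L : c1 ≤ L := by
    rw [hc1def, hLdef]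
    apply Real.sqrt_le_sqrt
    rw [div_le_iff₀ hN0R]
    have h1 : (0:ℝ) ≤ 4 * π * D'0 := by positivity
    have := le_mul_of_one_le_right h1 hNR
    linarith
  set g : ℝ → ℝ := fun ρ => c1 * (ρ ^ (q - 1) * Real.exp (-(β * ρ ^ 2)))
      + c1 * Kp * (ρ ^ (q - p - 1) * Real.exp (-(β * ρ ^ 2))) with hgdef
  have hO1 : IntegrableOn (fun ρ : ℝ => ρ ^ (q - 1) * Real.exp (-(β * ρ ^ 2))) (Set.Ioi 0) := by
    simpa [neg_mul] using integrableOn_rpow_mul_exp_neg_mul_sq hβ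
      (show (-1:ℝ) < q - 1 by linarith)
  have hO2 : IntegrableOn (fun ρ : ℝ => ρ ^ (q - p - 1) * Real.exp (-(β * ρ ^ 2))) (Set.Ioi 0) := by
    simpa [neg_mul] using integrableOn_rpow_mul_exp_neg_mul_sq hβ
      (show (-1:ℝ) < q - p - 1 by linarith)
  have hgint : IntegrableOn g (Set.Ioi 0) := (hO1.const_mul c1).add (hO2.const_mul (c1 * Kp))
  -- pointwise bound for the inner integral
  have hpoint : ∀ ρ : ℝ, ρ ∈ Set.Ioi (0:ℝ) →
      (∫ s : ℝ, (1 + |s| ^ p) * Real.exp (-((N:ℝ) * (s ^ 2 + μ ^ 2) * ρ ^ 2) / (2 * D'0)) * ρ ^ q)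
        ≤ g ρ := by
    intro ρ hρ
    have hρ0 : (0:ℝ) < ρ := hρ
    set lam := (N : ℝ) * ρ ^ 2 / (2 * D'0) with hlamdef
    have hlam0 : 0 < lam := by rw [hlamdef]; positivity
    have hrw : ∀ s : ℝ,
        (1 + |s| ^ p) * Real.exp (-((N:ℝ) * (s ^ 2 + μ ^ 2) * ρ ^ 2) / (2 * D'0)) * ρ ^ q
        = ((1 + |s| ^ p) * Real.exp (-(lam * s ^ 2))) * (Real.exp (-(β * ρ ^ 2)) * ρ ^ q) := by
      intro s
      have harg : -((N:ℝ) * (s ^ 2 + μ ^ 2) * ρ ^ 2) / (2 * D'0)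
          = -(lam * s ^ 2) + -(β * ρ ^ 2) := by
        rw [hlamdef, hβdef]; field_simp; ring
      rw [harg, Real.exp_add]; ring
    have hstep1 : (∫ s : ℝ,
        (1 + |s| ^ p) * Real.exp (-((N:ℝ) * (s ^ 2 + μ ^ 2) * ρ ^ 2) / (2 * D'0)) * ρ ^ q)
        = (∫ s : ℝ, (1 + |s| ^ p) * Real.exp (-(lam * s ^ 2)))
            * (Real.exp (-(β * ρ ^ 2)) * ρ ^ q) := by
      simp_rw [hrw]
      rw [integral_mul_const]
    have hsqrt : Real.sqrt (2 * π / lam) = c1 * ρ⁻¹ := by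
      have h1 : 2 * π / lam = 4 * π * D'0 / (N : ℝ) * (ρ ^ 2)⁻¹ := by
        rw [hlamdef]; field_simp; ring
      rw [h1, Real.sqrt_mul (by positivity), Real.sqrt_inv, Real.sqrt_sq hρ0.le, hc1def]
    have hXp : (p / lam) ^ (p / 2) = Kp * (ρ ^ p)⁻¹ := by
      have h1 : p / lam = 2 * D'0 * p / (N : ℝ) / ρ ^ 2 := by
        rw [hlamdef]; field_simp
      rw [h1, Real.div_rpow (by positivity) (by positivity)]
      have h2 : (ρ ^ 2) ^ (p / 2 : ℝ) = ρ ^ p := by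
        rw [← Real.rpow_natCast ρ 2, ← Real.rpow_mul hρ0.le]
        congr 1
        push_cast
        ring
      rw [h2, hKpdef, div_eq_mul_inv]
    have hq1 : ρ ^ (q - 1) = ρ ^ q * ρ⁻¹ := by
      rw [Real.rpow_sub hρ0, Real.rpow_one, div_eq_mul_inv]
    have hqp1 : ρ ^ (q - p - 1) = ρ ^ q * (ρ ^ p)⁻¹ * ρ⁻¹ := by
      rw [Real.rpow_sub hρ0, Real.rpow_sub hρ0, Real.rpow_one, div_div, div_eq_mul_inv, mul_inv]
      ring
    have halg : (1 + (p / lam) ^ (p / 2)) * Real.sqrt (2 * π / lam)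
        * (Real.exp (-(β * ρ ^ 2)) * ρ ^ q) = g ρ := by
      simp only [hgdef]
      rw [hsqrt, hXp, hq1, hqp1]
      ring
    rw [hstep1, ← halg]
    exact mul_le_mul_of_nonneg_right (aux4 hlam0 (by linarith : (0:ℝ) < p)) (by positivity)
  -- outer bound
  have houter : (∫ ρ in Set.Ioi (0:ℝ), ∫ s : ℝ,
      (1 + |s| ^ p) * Real.exp (-((N:ℝ) * (s ^ 2 + μ ^ 2) * ρ ^ 2) / (2 * D'0)) * ρ ^ q)
      ≤ ∫ ρ in Set.Ioi (0:ℝ), g ρ := by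
    refine integral_mono_of_nonneg ?_ hgint ?_
    · rw [EventuallyLE, ae_restrict_iff' measurableSet_Ioi]
      refine Filter.Eventually.of_forall fun ρ hρ => ?_
      have hρ0 : (0:ℝ) < ρ := hρ
      refine integral_nonneg fun s => ?_
      have h1 : (0:ℝ) ≤ 1 + |s| ^ p := by positivity
      have h2 : (0:ℝ) ≤ ρ ^ q := Real.rpow_nonneg hρ0.le q
      positivity
    · rw [EventuallyLE, ae_restrict_iff' measurableSet_Ioi]
      exact Filter.Eventually.of_forall hpoint
  have hgeq : (∫ ρ in Set.Ioi (0:ℝ), g ρ)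
      = c1 * (∫ ρ in Set.Ioi (0:ℝ), ρ ^ (q - 1) * Real.exp (-(β * ρ ^ 2)))
        + c1 * Kp * (∫ ρ in Set.Ioi (0:ℝ), ρ ^ (q - p - 1) * Real.exp (-(β * ρ ^ 2))) := by
    simp only [hgdef]
    rw [integral_add (hO1.const_mul c1) (hO2.const_mul (c1 * Kp)),
      MeasureTheory.integral_const_mul, MeasureTheory.integral_const_mul]
  set S₁ := ∫ ρ in Set.Ioi (0:ℝ), ρ ^ (q - 1) * Real.exp (-(β * ρ ^ 2)) with hS₁def
  set S₂ := ∫ ρ in Set.Ioi (0:ℝ), ρ ^ (q - p - 1) * Real.exp (-(β * ρ ^ 2)) with hS₂def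
  clear_value S₁ S₂
  have hS₁nn : 0 ≤ S₁ := hS₁def ▸ setIntegral_nonneg measurableSet_Ioi fun ρ hρ =>
    mul_nonneg (Real.rpow_nonneg (le_of_lt hρ) _) (Real.exp_pos _).le
  have hS₂nn : 0 ≤ S₂ := hS₂def ▸ setIntegral_nonneg measurableSet_Ioi fun ρ hρ =>
    mul_nonneg (Real.rpow_nonneg (le_of_lt hρ) _) (Real.exp_pos _).le
  have hexp_arg : ∀ ρ : ℝ, -(β * ρ ^ 2) / 2 = -(β / 2) * ρ ^ 2 := fun ρ => by ring
  have hS₁b : S₁ ≤ 1 / (q - 1 + 1) + W * Real.sqrt (2 * π / β) := by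
    rw [hS₁def]
    refine aux3 hβ (by linarith) hW1 fun ρ hρ => ?_
    have h1 := aux2 (t := ρ) (m := q - 1) (α := β) (by linarith) (by linarith) hβ
    rw [hexp_arg ρ] at h1
    refine h1.trans (mul_le_mul_of_nonneg_right ?_ (Real.exp_pos _).le)
    exact hkey (q - 1) (by linarith) (by linarith)
  have hS₂b : S₂ ≤ 1 / (q - p - 1 + 1) + W * Real.sqrt (2 * π / β) := by
    rw [hS₂def]
    refine aux3 hβ (by linarith) hW1 fun ρ hρ => ?_
    rcases le_or_gt (q - p - 1) 0 with hm | hm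
    · have h1 : ρ ^ (q - p - 1) ≤ 1 :=
        Real.rpow_le_one_of_one_le_of_nonpos hρ hm
      have h2 : Real.exp (-(β * ρ ^ 2)) ≤ Real.exp (-(β / 2) * ρ ^ 2) := by
        apply Real.exp_le_exp.mpr
        have := mul_nonneg hβ.le (sq_nonneg ρ)
        linarith
      calc ρ ^ (q - p - 1) * Real.exp (-(β * ρ ^ 2))
          ≤ 1 * Real.exp (-(β / 2) * ρ ^ 2) :=
            mul_le_mul h1 h2 (Real.exp_pos _).le zero_le_one
        _ ≤ W * Real.exp (-(β / 2) * ρ ^ 2) :=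
            mul_le_mul_of_nonneg_right hW1 (Real.exp_pos _).le
    · have h1 := aux2 (t := ρ) (m := q - p - 1) (α := β) (by linarith) hm hβ
      rw [hexp_arg ρ] at h1
      refine h1.trans (mul_le_mul_of_nonneg_right ?_ (Real.exp_pos _).le)
      exact hkey (q - p - 1) hm (by linarith)
  -- numeric simplifications
  have hsqβ : Real.sqrt (2 * π / β) ≤ G := by
    rw [hGdef]
    apply Real.sqrt_le_sqrt
    have h1 : 2 * π / β = 4 * π * D'0 / ((N : ℝ) * μ ^ 2) := by
      rw [hβdef]; field_simp; ring
    rw [h1]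
    exact div_le_div_of_nonneg_left (by positivity) hμ2 (le_mul_of_one_le_left hμ2.le hNR)
  have h1q : 1 / (q - 1 + 1) ≤ 1 := by
    rw [show q - 1 + 1 = q by ring, div_le_one (by linarith)]
    linarith
  have h2q : 1 / (q - p - 1 + 1) ≤ 1 / δ := by
    rw [show q - p - 1 + 1 = q - p by ring]
    exact one_div_le_one_div_of_le hδ hqp
  have hsq0 : 0 ≤ Real.sqrt (2 * π / β) := Real.sqrt_nonneg _
  have hWsq : W * Real.sqrt (2 * π / β) ≤ W * G :=
    mul_le_mul_of_nonneg_left hsqβ (by linarith)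
  have hS₁' : S₁ ≤ 1 + W * G := by linarith
  have hS₂' : S₂ ≤ 1 / δ + W * G := by linarith
  -- final chain
  have hWG0 : (0:ℝ) ≤ W * G := mul_nonneg (by linarith) hG0
  have t1 : c1 * S₁ ≤ L * (1 + W * G) :=
    mul_le_mul hc1L hS₁' hS₁nn hL0
  have t2 : c1 * Kp * S₂ ≤ L * V * (1 / δ + W * G) := by
    have h1 : c1 * Kp ≤ L * V := mul_le_mul hc1L hKpV hKp0 hL0
    exact mul_le_mul h1 hS₂' hS₂nn (mul_nonneg hL0 (by linarith))
  have hfin := auxfin hL0 hG0 hδ hW1 hV1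
  have hLc₀ : L * (1 + 2 * G + 1 / δ) ≤ c₀ := by rw [hc₀def]; exact le_max_right _ _
  have hWV0 : (0:ℝ) ≤ W * V := mul_nonneg (by linarith) (by linarith)
  have hchain : c1 * S₁ + c1 * Kp * S₂ ≤ c₀ * (W * V) := by
    have h1 : L * (1 + 2 * G + 1 / δ) * (W * V) ≤ c₀ * (W * V) :=
      mul_le_mul_of_nonneg_right hLc₀ hWV0
    linarith
  -- convert to C ^ N
  have hWpow : W = (R ^ (A₂ / 2)) ^ N := by
    rw [hWdef, ← Real.rpow_natCast (R ^ (A₂ / 2)) N, ← Real.rpow_mul (by linarith : (0:ℝ) ≤ R)]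
    congr 1
    ring
  have hVpow : V = (R₂ ^ (A₁ / 2)) ^ N := by
    rw [hVdef, ← Real.rpow_natCast (R₂ ^ (A₁ / 2)) N, ← Real.rpow_mul (by linarith : (0:ℝ) ≤ R₂)]
    congr 1
    ring
  have hlast : c₀ * (W * V) ≤ C ^ N := by
    have h1 : c₀ ≤ c₀ ^ N := le_self_pow₀ hc₀1 (by omega)
    have h2 : c₀ * (W * V) ≤ c₀ ^ N * (W * V) :=
      mul_le_mul_of_nonneg_right h1 hWV0
    have h3 : c₀ ^ N * (W * V) = C ^ N := by
      rw [hCdef, mul_pow, mul_pow, hWpow, hVpow]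
    linarith
  calc (∫ ρ in Set.Ioi (0:ℝ), ∫ s : ℝ,
      (1 + |s| ^ p) * Real.exp (-((N:ℝ) * (s ^ 2 + μ ^ 2) * ρ ^ 2) / (2 * D'0)) * ρ ^ q)
      ≤ ∫ ρ in Set.Ioi (0:ℝ), g ρ := houter
    _ = c1 * S₁ + c1 * Kp * S₂ := hgeq
    _ ≤ c₀ * (W * V) := hchain
    _ ≤ C ^ N := hlast
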